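/- Let Ω₀ ⊆ ℂ be a simply connected domain and let F₀ + conj(G₀) be a univalent, sense preserving harmonic mapping on Ω₀ with G₀' = λ·F₀' for some λ ∈ ℂ (necessarily |λ| < 1). Suppose F(t,·), G(t,·) are holomorphic on Ω₀ for each t ≥ 0, with C¹ dependence on t, that F(0,·) = F₀ and G(0,·) = G₀, and that f = ∂F/∂z, g = ∂G/∂z satisfy the governing equation f_t(t,z)·conj(f(t,z)) − g(t,z)·conj(g_t(t,z)) = i·ν(z, conj(z)) for some time-independent real-valued function ν on Ω₀, with f(t,·) and g(t,·) not identically zero. Then there exist a C¹ function β : [0,∞) → ℂ with β(0) = λ and a real constant ν₀ such that for all t ≥ 0 and z ∈ Ω₀: f(t,z) = √(1 − |λ|² + |β(t)|²) · exp( i·∫₀ᵗ (ν₀ + Im{β(s)·conj(β'(s))}) / (1 − |λ|² + |β(s)|²) ds ) · F₀'(z) and g(t,z) = β(t)·F₀'(z). -/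

import Mathlib

open Set

open Complex

local notation "conj'" => starRingEnd ℂ

lemma hasDerivAt_line {p : ℂ → ℂ} {p' : ℂ} (z v : ℂ) (hp : HasDerivAt p p' z) :
    HasDerivAt (fun e : ℝ => p (z + e • v)) (v * p') 0 := by
  have hline : HasDerivAt (fun e : ℝ => z + e • v) v 0 := by
    simpa using ((hasDerivAt_id (0:ℝ)).smul_const v).const_add z
  have hp2 : HasFDerivAt p ((ContinuousLinearMap.smulRight (1 : ℂ →L[ℂ] ℂ) p').restrictScalars ℝ)
      (z + (0:ℝ) • v) := by
    rw [zero_smul, add_zero]; exact hp.hasFDerivAt.restrictScalars ℝ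
  have := hp2.comp_hasDerivAt 0 hline
  simpa [Function.comp_def, smul_eq_mul, mul_comm] using this

lemma wirtinger {Ω : Set ℂ} (ho : IsOpen Ω) {z : ℂ} (hz : z ∈ Ω)
    {p₁ p₂ q₁ q₂ : ℂ → ℂ} {p₁' p₂' q₁' q₂' c : ℂ}
    (h1 : HasDerivAt p₁ p₁' z) (h2 : HasDerivAt p₂ p₂' z)
    (h3 : HasDerivAt q₁ q₁' z) (h4 : HasDerivAt q₂ q₂' z)
    (hc : ∀ w ∈ Ω, p₁ w * conj' (p₂ w) - q₁ w * conj' (q₂ w) = c) :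
    p₁' * conj' (p₂ z) = q₁' * conj' (q₂ z) ∧
      p₁ z * conj' p₂' = q₁ z * conj' q₂' := by
  simp only [starRingEnd_apply] at hc ⊢
  have key : ∀ v : ℂ, v * (p₁' * star (p₂ z) - q₁' * star (q₂ z))
      + star v * (p₁ z * star p₂' - q₁ z * star q₂') = 0 := by
    intro v
    have a1 := hasDerivAt_line z v h1
    have a2 := (hasDerivAt_line z v h2).star
    have a3 := hasDerivAt_line z v h3
    have a4 := (hasDerivAt_line z v h4).star
    have hD := (a1.mul a2).sub (a3.mul a4)
    simp only [zero_smul, add_zero] at hD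
    have hconst : HasDerivAt (fun e : ℝ => p₁ (z + e • v) * star (p₂ (z + e • v))
        - q₁ (z + e • v) * star (q₂ (z + e • v))) 0 0 := by
      have hmem : ∀ᶠ e : ℝ in nhds 0, z + e • v ∈ Ω := by
        have hcont : ContinuousAt (fun e : ℝ => z + e • v) 0 := by fun_prop
        have := hcont.preimage_mem_nhds (ho.mem_nhds (by simpa using hz))
        exact this
      exact (hasDerivAt_const 0 c).congr_of_eventuallyEq
        (hmem.mono fun e he => hc _ he)
    have h0 := hD.unique hconst
    simp only [star_mul', star_mul, star_star] at h0 ⊢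
    linear_combination h0
  have e1 := key 1
  have e2 := key Complex.I
  simp only [star_one, one_mul] at e1
  rw [show (star Complex.I) = -Complex.I by simp [Complex.star_def]] at e2
  have hXY : (p₁' * star (p₂ z) - q₁' * star (q₂ z))
      = (p₁ z * star p₂' - q₁ z * star q₂') :=
    mul_left_cancel₀ Complex.I_ne_zero (by linear_combination e2)
  constructor
  · linear_combination e1 / 2 + hXY / 2
  · linear_combination e1 / 2 - hXY / 2

lemma eq_of_deriv_zero {Ω : Set ℂ} (ho : IsOpen Ω) (hconn : IsPreconnected Ω)
    {h : ℂ → ℂ} (hd : DifferentiableOn ℂ h Ω) (h0 : ∀ z ∈ Ω, deriv h z = 0)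
    {z w : ℂ} (hz : z ∈ Ω) (hw : w ∈ Ω) : h z = h w := by
  have hloc : ∀ x ∈ Ω, ∀ᶠ y in nhds x, h y = h x := by
    intro x hx
    obtain ⟨r, hr, hball⟩ := Metric.isOpen_iff.1 ho x hx
    refine Filter.eventually_of_mem (Metric.ball_mem_nhds x hr) fun y hy => ?_
    have hconv : Convex ℝ (Metric.ball x r) := convex_ball x r
    refine hconv.is_const_of_fderivWithin_eq_zero
      (hd.mono hball) (fun u hu => ?_) hy (Metric.mem_ball_self hr)
    rw [fderivWithin_of_isOpen Metric.isOpen_ball hu]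
    have hdu : DifferentiableAt ℂ h u := hd.differentiableAt (ho.mem_nhds (hball hu))
    have hDu : HasDerivAt h 0 u := by
      simpa [h0 u (hball hu)] using hdu.hasDerivAt
    rw [hDu.hasFDerivAt.fderiv]
    ext x
    simp
  set S := {x : ℂ | x ∈ Ω ∧ h x = h w} with hS
  set V := {x : ℂ | x ∈ Ω ∧ h x ≠ h w} with hV
  have hSopen : IsOpen S := by
    rw [isOpen_iff_mem_nhds]
    rintro x ⟨hxΩ, hxv⟩
    filter_upwards [hloc x hxΩ, ho.mem_nhds hxΩ] with y hy1 hy2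
    exact ⟨hy2, hy1.trans hxv⟩
  have hVopen : IsOpen V := by
    rw [isOpen_iff_mem_nhds]
    rintro x ⟨hxΩ, hxv⟩
    filter_upwards [hloc x hxΩ, ho.mem_nhds hxΩ] with y hy1 hy2
    exact ⟨hy2, hy1 ▸ hxv⟩
  have hsub : Ω ⊆ S ∪ V := fun x hx => by
    by_cases hxx : h x = h w
    · exact Or.inl ⟨hx, hxx⟩
    · exact Or.inr ⟨hx, hxx⟩
  have hdisj : Disjoint S V := by
    rw [Set.disjoint_iff]
    rintro x ⟨⟨_, h1⟩, ⟨_, h2⟩⟩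
    exact absurd h1 h2
  exact ((hconn.subset_left_of_subset_union hSopen hVopen hdisj hsub ⟨w, hw, ⟨hw, rfl⟩⟩) hz).2

lemma struct_const {Ω : Set ℂ} (ho : IsOpen Ω) (hconn : IsPreconnected Ω)
    {h k : ℂ → ℂ} (hh : DifferentiableOn ℂ h Ω) (hk : DifferentiableOn ℂ k Ω)
    {c : ℝ} (hc : 0 < c)
    (hid : ∀ z ∈ Ω, h z * conj' (h z) - k z * conj' (k z) = (c : ℂ)) :
    ∀ z ∈ Ω, ∀ w ∈ Ω, h z = h w ∧ k z = k w := by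
  have hh' : DifferentiableOn ℂ (deriv h) Ω :=
    ((hh.analyticOnNhd ho).deriv_of_isOpen ho).differentiableOn
  have hk' : DifferentiableOn ℂ (deriv k) Ω :=
    ((hk.analyticOnNhd ho).deriv_of_isOpen ho).differentiableOn
  have hDh : ∀ z ∈ Ω, HasDerivAt h (deriv h z) z := fun z hz =>
    (hh.differentiableAt (ho.mem_nhds hz)).hasDerivAt
  have hDk : ∀ z ∈ Ω, HasDerivAt k (deriv k z) z := fun z hz =>
    (hk.differentiableAt (ho.mem_nhds hz)).hasDerivAt
  have hDh' : ∀ z ∈ Ω, HasDerivAt (deriv h) (deriv (deriv h) z) z := fun z hz =>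
    (hh'.differentiableAt (ho.mem_nhds hz)).hasDerivAt
  have hDk' : ∀ z ∈ Ω, HasDerivAt (deriv k) (deriv (deriv k) z) z := fun z hz =>
    (hk'.differentiableAt (ho.mem_nhds hz)).hasDerivAt
  have star1 : ∀ z ∈ Ω, deriv h z * conj' (h z) = deriv k z * conj' (k z) := fun z hz =>
    (wirtinger ho hz (hDh z hz) (hDh z hz) (hDk z hz) (hDk z hz) hid).1
  have star2 : ∀ z ∈ Ω, deriv h z * conj' (deriv h z) = deriv k z * conj' (deriv k z) := by
    intro z hz
    exact (wirtinger (c := 0) ho hz (hDh' z hz) (hDh z hz) (hDk' z hz) (hDk z hz)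
      (fun w hw => sub_eq_zero.2 (star1 w hw))).2
  have hnorm : ∀ z ∈ Ω, ‖k z‖ < ‖h z‖ := by
    intro z hz
    have hidz := hid z hz
    rw [Complex.mul_conj, Complex.mul_conj] at hidz
    have hre : Complex.normSq (h z) - Complex.normSq (k z) = c := by
      have := congrArg Complex.re hidz
      simpa using this
    rw [Complex.normSq_eq_norm_sq, Complex.normSq_eq_norm_sq] at hre
    have h1 : ‖k z‖ ^ 2 < ‖h z‖ ^ 2 := by linarith
    exact lt_of_pow_lt_pow_left₀ 2 (norm_nonneg _) h1
  have hd0 : ∀ z ∈ Ω, deriv h z = 0 ∧ deriv k z = 0 := by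
    intro z hz
    have e1 : ‖deriv h z‖ * ‖h z‖ = ‖deriv k z‖ * ‖k z‖ := by
      have := congrArg norm (star1 z hz)
      simpa [norm_mul] using this
    have e2 : ‖deriv h z‖ = ‖deriv k z‖ := by
      have s2 := star2 z hz
      rw [Complex.mul_conj, Complex.mul_conj] at s2
      have hsq : Complex.normSq (deriv h z) = Complex.normSq (deriv k z) := by
        exact_mod_cast s2
      rw [Complex.norm_def, Complex.norm_def, hsq]
    have hlt := hnorm z hz
    have hz0 : ‖deriv h z‖ = 0 := by nlinarith [norm_nonneg (deriv h z), norm_nonneg (k z)]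
    exact ⟨norm_eq_zero.1 hz0, norm_eq_zero.1 (by rw [← e2]; exact hz0)⟩
  intro z hz w hw
  exact ⟨eq_of_deriv_zero ho hconn hh (fun x hx => (hd0 x hx).1) hz hw,
    eq_of_deriv_zero ho hconn hk (fun x hx => (hd0 x hx).2) hz hw⟩

lemma ftc_Ici {m : ℝ → ℝ} (hm : ContinuousOn m (Ici 0)) {t : ℝ} (ht : t ∈ Ici (0:ℝ)) :
    HasDerivWithinAt (fun u => ∫ s in (0:ℝ)..u, m s) (m t) (Ici 0) t := by
  have hint : IntervalIntegrable m MeasureTheory.volume 0 t := by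
    apply ContinuousOn.intervalIntegrable
    apply hm.mono
    rw [uIcc_of_le ht]
    exact Icc_subset_Ici_self
  rcases eq_or_lt_of_le (mem_Ici.mp ht) with h0 | h0
  · subst h0
    exact intervalIntegral.integral_hasDerivWithinAt_right (t := Ioi 0) hint
      (ContinuousOn.stronglyMeasurableAtFilter_nhdsWithin
        (hm.mono Ioi_subset_Ici_self) measurableSet_Ioi 0)
      ((hm 0 self_mem_Ici).mono Ioi_subset_Ici_self)
  · exact (intervalIntegral.integral_hasDerivAt_right hint
      ((hm.mono Ioi_subset_Ici_self).stronglyMeasurableAtFilter isOpen_Ioi t h0)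
      (hm.continuousAt (Ici_mem_nhds h0))).hasDerivWithinAt

lemma const_of_derivWithin_zero' {Fn : ℝ → ℂ}
    (hd : ∀ t ∈ Ici (0:ℝ), HasDerivWithinAt Fn 0 (Ici 0) t) {t : ℝ} (ht : t ∈ Ici (0:ℝ)) :
    Fn t = Fn 0 := by
  have hdiff : DifferentiableOn ℝ Fn (Ici 0) := fun s hs => (hd s hs).differentiableWithinAt
  have hfd0 : ∀ s ∈ Ici (0:ℝ), fderivWithin ℝ Fn (Ici 0) s = 0 := by
    intro s hs
    have hF' : HasFDerivWithinAt Fn (0 : ℝ →L[ℝ] ℂ) (Ici 0) s := by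
      have := (hd s hs).hasFDerivWithinAt
      rw [ContinuousLinearMap.toSpanSingleton_zero] at this; exact this
    exact hF'.fderivWithin (uniqueDiffOn_Ici 0 s hs)
  exact (convex_Ici (0:ℝ)).is_const_of_fderivWithin_eq_zero hdiff hfd0 ht self_mem_Ici


/-- **Theorem (solutions with harmonic labellings, linearly dependent case).** If the
initial univalent sense preserving labelling `F₀ + conj G₀` satisfies `G₀' = λ F₀'`, and
`f = ∂F/∂z`, `g = ∂G/∂z` solve the governing equation
`f_t conj f − g conj g_t = i ν(z, conj z)` with `f(t,·), g(t,·)` not identically zero,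
then `f(t,z) = √(1 − |λ|² + |β(t)|²) e^{i∫₀ᵗ (ν₀ + Im(β conj β'))/(1 − |λ|² + |β|²)} F₀'(z)`
and `g(t,z) = β(t) F₀'(z)` for some `C¹` function `β` with `β(0) = λ` and some `ν₀ ∈ ℝ`. -/
theorem stmt_6 (Ω₀ : Set ℂ) (hΩne : Ω₀.Nonempty) (hΩo : IsOpen Ω₀) (hΩc : IsConnected Ω₀)
    (hΩsc : SimplyConnectedSpace Ω₀)
    (F₀ G₀ : ℂ → ℂ)
    (hF₀ : DifferentiableOn ℂ F₀ Ω₀) (hG₀ : DifferentiableOn ℂ G₀ Ω₀)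
    (huniv : Set.InjOn (fun z => F₀ z + (starRingEnd ℂ) (G₀ z)) Ω₀)
    (hsp : ∀ z ∈ Ω₀, 0 < ‖deriv F₀ z‖ ^ 2 - ‖deriv G₀ z‖ ^ 2)
    (lam : ℂ) (hlam : ∀ z ∈ Ω₀, deriv G₀ z = lam * deriv F₀ z)
    (F G f g ft gt : ℝ → ℂ → ℂ)
    (hF : ∀ t ∈ Ici (0:ℝ), DifferentiableOn ℂ (F t) Ω₀)
    (hG : ∀ t ∈ Ici (0:ℝ), DifferentiableOn ℂ (G t) Ω₀)
    (hf : ∀ t ∈ Ici (0:ℝ), ∀ z ∈ Ω₀, f t z = deriv (F t) z)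
    (hg : ∀ t ∈ Ici (0:ℝ), ∀ z ∈ Ω₀, g t z = deriv (G t) z)
    (hftd : ∀ z ∈ Ω₀, ∀ t ∈ Ici (0:ℝ),
      HasDerivWithinAt (fun s => f s z) (ft t z) (Ici 0) t)
    (hgtd : ∀ z ∈ Ω₀, ∀ t ∈ Ici (0:ℝ),
      HasDerivWithinAt (fun s => g s z) (gt t z) (Ici 0) t)
    (hftc : ∀ z ∈ Ω₀, ContinuousOn (fun t => ft t z) (Ici 0))
    (hgtc : ∀ z ∈ Ω₀, ContinuousOn (fun t => gt t z) (Ici 0))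
    (hF0 : ∀ z ∈ Ω₀, F 0 z = F₀ z) (hG0 : ∀ z ∈ Ω₀, G 0 z = G₀ z)
    (ν : ℂ → ℝ)
    (hgov : ∀ t ∈ Ici (0:ℝ), ∀ z ∈ Ω₀,
      ft t z * (starRingEnd ℂ) (f t z) - g t z * (starRingEnd ℂ) (gt t z)
        = Complex.I * (ν z : ℂ))
    (hfne : ∀ t ∈ Ici (0:ℝ), ∃ z ∈ Ω₀, f t z ≠ 0)
    (hgne : ∀ t ∈ Ici (0:ℝ), ∃ z ∈ Ω₀, g t z ≠ 0) :
    ∃ (β : ℝ → ℂ) (ν₀ : ℝ), ContDiffOn ℝ 1 β (Ici 0) ∧ β 0 = lam ∧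
      ∀ t ∈ Ici (0:ℝ), ∀ z ∈ Ω₀,
        f t z = (Real.sqrt (1 - ‖lam‖ ^ 2 + ‖β t‖ ^ 2) : ℂ) *
            Complex.exp (Complex.I * ((∫ s in (0:ℝ)..t,
              (ν₀ + (β s * (starRingEnd ℂ) (derivWithin β (Ici 0) s)).im)
                / (1 - ‖lam‖ ^ 2 + ‖β s‖ ^ 2)) : ℝ)) * deriv F₀ z ∧
        g t z = β t * deriv F₀ z := by
  obtain ⟨z₀, hz₀⟩ := hΩne
  set φ : ℂ → ℂ := deriv F₀ with hφdef
  set c : ℝ := 1 - ‖lam‖ ^ 2 with hcdef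
  -- basic positivity
  have hφν : ∀ z ∈ Ω₀, 0 < ‖φ z‖ ^ 2 * c := by
    intro z hz
    have h1 := hsp z hz
    rw [hlam z hz] at h1
    have : ‖lam * φ z‖ ^ 2 = ‖lam‖ ^ 2 * ‖φ z‖ ^ 2 := by
      rw [norm_mul]; ring
    nlinarith
  have hφ : ∀ z ∈ Ω₀, φ z ≠ 0 := by
    intro z hz h0
    have := hφν z hz
    rw [h0] at this
    simp at this
  have hc : 0 < c := by
    have h1 := hφν z₀ hz₀
    have h2 : 0 ≤ ‖φ z₀‖ ^ 2 := by positivity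
    nlinarith
  -- values at time 0
  have hf0d : ∀ z ∈ Ω₀, f 0 z = φ z := by
    intro z hz
    rw [hf 0 self_mem_Ici z hz]
    apply Filter.EventuallyEq.deriv_eq
    filter_upwards [hΩo.mem_nhds hz] with w hw using hF0 w hw
  have hg0d : ∀ z ∈ Ω₀, g 0 z = lam * φ z := by
    intro z hz
    rw [hg 0 self_mem_Ici z hz, ← hlam z hz]
    apply Filter.EventuallyEq.deriv_eq
    filter_upwards [hΩo.mem_nhds hz] with w hw using hG0 w hw
  -- |f|² - |g|² is time independent
  have hDconst : ∀ z ∈ Ω₀, ∀ t ∈ Ici (0:ℝ),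
      f t z * conj' (f t z) - g t z * conj' (g t z) = (c : ℂ) * (φ z * conj' (φ z)) := by
    intro z hz t ht
    have hder : ∀ s ∈ Ici (0:ℝ), HasDerivWithinAt
        (fun τ => f τ z * conj' (f τ z) - g τ z * conj' (g τ z)) 0 (Ici 0) s := by
      intro s hs
      have h1 := hftd z hz s hs
      have h2 := hgtd z hz s hs
      have hD := (h1.mul h1.star).sub (h2.mul h2.star)
      have hX := hgov s hs z hz
      have hX2 := congrArg conj' hX
      simp only [map_sub, map_mul, Complex.conj_conj, Complex.conj_I, Complex.conj_ofReal] at hX2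
      have hval : ft s z * star (f s z) + f s z * star (ft s z)
          - (gt s z * star (g s z) + g s z * star (gt s z)) = 0 := by
        simp only [starRingEnd_apply] at hX hX2
        linear_combination hX + hX2
      rw [hval] at hD
      simpa only [starRingEnd_apply, Pi.mul_def, Pi.sub_def] using hD
    have hdiff : DifferentiableOn ℝ
        (fun τ => f τ z * conj' (f τ z) - g τ z * conj' (g τ z)) (Ici 0) :=
      fun s hs => ((hder s hs).differentiableWithinAt)
    have hfd0 : ∀ s ∈ Ici (0:ℝ), fderivWithin ℝ
        (fun τ => f τ z * conj' (f τ z) - g τ z * conj' (g τ z)) (Ici 0) s = 0 := by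
      intro s hs
      have hF' : HasFDerivWithinAt
          (fun τ => f τ z * conj' (f τ z) - g τ z * conj' (g τ z))
          (0 : ℝ →L[ℝ] ℂ) (Ici 0) s := by
        have := (hder s hs).hasFDerivWithinAt
        rw [ContinuousLinearMap.toSpanSingleton_zero] at this; exact this
      exact hF'.fderivWithin (uniqueDiffOn_Ici 0 s hs)
    have hcst := (convex_Ici (0:ℝ)).is_const_of_fderivWithin_eq_zero hdiff hfd0 ht self_mem_Ici
    have hnl : Complex.normSq lam = ‖lam‖ ^ 2 := by
      rw [Complex.normSq_eq_norm_sq]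
    rw [hcst, hf0d z hz, hg0d z hz, Complex.mul_conj, Complex.mul_conj,
      Complex.normSq_mul, hnl, hcdef]
    push_cast
    ring
  -- differentiability in z
  have hφdiff : DifferentiableOn ℂ φ Ω₀ :=
    ((hF₀.analyticOnNhd hΩo).deriv_of_isOpen hΩo).differentiableOn
  have hfdiff : ∀ t ∈ Ici (0:ℝ), DifferentiableOn ℂ (f t) Ω₀ := by
    intro t ht
    exact DifferentiableOn.congr
      ((((hF t ht).analyticOnNhd hΩo).deriv_of_isOpen hΩo).differentiableOn)
      (fun z hz => hf t ht z hz)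
  have hgdiff : ∀ t ∈ Ici (0:ℝ), DifferentiableOn ℂ (g t) Ω₀ := by
    intro t ht
    exact DifferentiableOn.congr
      ((((hG t ht).analyticOnNhd hΩo).deriv_of_isOpen hΩo).differentiableOn)
      (fun z hz => hg t ht z hz)
  -- structural constancy of f t / φ and g t / φ
  have hstruct : ∀ t ∈ Ici (0:ℝ), ∀ z ∈ Ω₀,
      f t z / φ z = f t z₀ / φ z₀ ∧ g t z / φ z = g t z₀ / φ z₀ := by
    intro t ht z hz
    have hid : ∀ w ∈ Ω₀, (f t w / φ w) * conj' (f t w / φ w)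
        - (g t w / φ w) * conj' (g t w / φ w) = (c : ℂ) := by
      intro w hw
      have base := hDconst w hw t ht
      have h1 : φ w ≠ 0 := hφ w hw
      have h2 : conj' (φ w) ≠ 0 := by simpa using h1
      rw [map_div₀, map_div₀]
      field_simp
      linear_combination base
    exact struct_const hΩo hΩc.isPreconnected
      ((hfdiff t ht).div hφdiff (fun w hw => hφ w hw))
      ((hgdiff t ht).div hφdiff (fun w hw => hφ w hw)) hc hid z hz z₀ hz₀
  set α : ℝ → ℂ := fun t => f t z₀ / φ z₀ with hαdef
  set β : ℝ → ℂ := fun t => g t z₀ / φ z₀ with hβdef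
  clear_value α β
  have hφz₀ : φ z₀ ≠ 0 := hφ z₀ hz₀
  have hfα : ∀ t ∈ Ici (0:ℝ), ∀ z ∈ Ω₀, f t z = α t * φ z := by
    intro t ht z hz
    have h1 := (hstruct t ht z hz).1
    rw [div_eq_iff (hφ z hz)] at h1
    rw [hαdef]
    exact h1
  have hgβ : ∀ t ∈ Ici (0:ℝ), ∀ z ∈ Ω₀, g t z = β t * φ z := by
    intro t ht z hz
    have h1 := (hstruct t ht z hz).2
    rw [div_eq_iff (hφ z hz)] at h1
    rw [hβdef]
    exact h1
  have hβ0 : β 0 = lam := by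
    rw [hβdef]
    simp only []
    rw [hg0d z₀ hz₀]
    field_simp
  have hα0 : α 0 = 1 := by
    rw [hαdef]
    simp only []
    rw [hf0d z₀ hz₀]
    field_simp
  -- time derivatives of α and β
  set A : ℝ → ℂ := fun t => ft t z₀ / φ z₀ with hAdef
  set B : ℝ → ℂ := fun t => gt t z₀ / φ z₀ with hBdef
  clear_value A B
  have hA : ∀ t ∈ Ici (0:ℝ), HasDerivWithinAt α (A t) (Ici 0) t := by
    intro t ht
    rw [hαdef, hAdef]
    exact (hftd z₀ hz₀ t ht).div_const _
  have hB : ∀ t ∈ Ici (0:ℝ), HasDerivWithinAt β (B t) (Ici 0) t := by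
    intro t ht
    rw [hβdef, hBdef]
    exact (hgtd z₀ hz₀ t ht).div_const _
  have hAc : ContinuousOn A (Ici 0) := by
    rw [hAdef]; exact (hftc z₀ hz₀).div_const _
  have hBc : ContinuousOn B (Ici 0) := by
    rw [hBdef]; exact (hgtc z₀ hz₀).div_const _
  have hαc : ContinuousOn α (Ici 0) := fun t ht => (hA t ht).continuousWithinAt
  have hβc : ContinuousOn β (Ici 0) := fun t ht => (hB t ht).continuousWithinAt
  -- modulus relation
  have hφφ : φ z₀ * conj' (φ z₀) ≠ 0 := mul_ne_zero hφz₀ (by simpa using hφz₀)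
  have hαβ : ∀ t ∈ Ici (0:ℝ), α t * conj' (α t) - β t * conj' (β t) = (c : ℂ) := by
    intro t ht
    have base := hDconst z₀ hz₀ t ht
    rw [hfα t ht z₀ hz₀, hgβ t ht z₀ hz₀] at base
    apply mul_right_cancel₀ hφφ
    simp only [map_mul] at base
    linear_combination base
  have hαnormsq : ∀ t ∈ Ici (0:ℝ), ‖α t‖ ^ 2 = c + ‖β t‖ ^ 2 := by
    intro t ht
    have h1 := hαβ t ht
    rw [Complex.mul_conj, Complex.mul_conj] at h1
    have h2 : Complex.normSq (α t) - Complex.normSq (β t) = c := by exact_mod_cast h1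
    rw [Complex.normSq_eq_norm_sq, Complex.normSq_eq_norm_sq] at h2
    linarith
  have hαpos : ∀ t ∈ Ici (0:ℝ), 0 < ‖α t‖ := by
    intro t ht
    have h1 := hαnormsq t ht
    have h2 : 0 ≤ ‖β t‖ ^ 2 := by positivity
    nlinarith [norm_nonneg (α t)]
  have hαne : ∀ t ∈ Ici (0:ℝ), α t ≠ 0 := fun t ht =>
    norm_pos_iff.1 (hαpos t ht)
  -- the governing equation at z₀
  set ν₀ : ℝ := ν z₀ / Complex.normSq (φ z₀) with hν₀def
  clear_value ν₀
  have hnsne : Complex.normSq (φ z₀) ≠ 0 := by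
    simpa [Complex.normSq_eq_zero] using hφz₀
  have hkey : ∀ t ∈ Ici (0:ℝ), A t * conj' (α t) - β t * conj' (B t)
      = Complex.I * (ν₀ : ℂ) := by
    intro t ht
    have base := hgov t ht z₀ hz₀
    have hftφ : ft t z₀ = A t * φ z₀ := by rw [hAdef]; field_simp
    have hgtφ : gt t z₀ = B t * φ z₀ := by rw [hBdef]; field_simp
    rw [hfα t ht z₀ hz₀, hgβ t ht z₀ hz₀, hftφ, hgtφ] at base
    have h2 : (A t * conj' (α t) - β t * conj' (B t)) * (φ z₀ * conj' (φ z₀))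
        = Complex.I * ((ν z₀ : ℝ) : ℂ) := by
      simp only [map_mul] at base
      linear_combination base
    rw [Complex.mul_conj] at h2
    rw [hν₀def]
    push_cast
    rw [← mul_div_assoc, eq_div_iff (by exact_mod_cast hnsne)]
    linear_combination h2
  -- the phase function
  set m : ℝ → ℝ := fun s => (A s * conj' (α s)).im / ‖α s‖ ^ 2 with hmdef
  clear_value m
  have hden : ∀ s ∈ Ici (0:ℝ), ‖α s‖ ^ 2 ≠ 0 := fun s hs => by
    have := hαpos s hs; positivity
  have hmc : ContinuousOn m (Ici 0) := by
    rw [hmdef]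
    apply ContinuousOn.div
    · exact Complex.continuous_im.comp_continuousOn
        (hAc.mul (Complex.continuous_conj.comp_continuousOn hαc))
    · exact (hαc.norm.pow 2)
    · exact hden
  set θ : ℝ → ℝ := fun u => ∫ s in (0:ℝ)..u, m s with hθdef
  clear_value θ
  have hθ : ∀ t ∈ Ici (0:ℝ), HasDerivWithinAt θ (m t) (Ici 0) t := by
    intro t ht
    rw [hθdef]
    exact ftc_Ici hmc ht
  have hθ0 : θ 0 = 0 := by rw [hθdef]; exact intervalIntegral.integral_same
  set E : ℝ → ℂ := fun t => Complex.exp (-(Complex.I * (θ t : ℂ))) with hEdef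
  clear_value E
  have hE : ∀ t ∈ Ici (0:ℝ), HasDerivWithinAt E
      (Complex.exp (-(Complex.I * (θ t : ℂ))) * (-(Complex.I * (m t : ℂ)))) (Ici 0) t := by
    intro t ht
    have h2 : HasDerivWithinAt (fun s => ((θ s : ℝ) : ℂ)) ((m t : ℂ)) (Ici 0) t := by
      have := (Complex.ofRealCLM.hasFDerivAt (x := θ t)).comp_hasDerivWithinAt t (hθ t ht)
      simpa [Function.comp_def] using this
    rw [hEdef]
    exact ((h2.const_mul Complex.I).neg).cexp
  have hEE : ∀ t : ℝ, E t * conj' (E t) = 1 := by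
    intro t
    rw [hEdef]
    simp only []
    rw [← Complex.exp_conj, ← Complex.exp_add]
    simp [Complex.conj_ofReal]
  have hEne : ∀ t : ℝ, E t ≠ 0 := by
    intro t
    rw [hEdef]
    exact Complex.exp_ne_zero _
  set q : ℝ → ℂ := fun t => α t * E t with hqdef
  clear_value q
  have hq : ∀ t ∈ Ici (0:ℝ), HasDerivWithinAt q
      (A t * E t + α t * (Complex.exp (-(Complex.I * (θ t : ℂ))) * (-(Complex.I * (m t : ℂ)))))
      (Ici 0) t := by
    intro t ht
    rw [hqdef]
    have hEt' : HasDerivWithinAt E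
        (Complex.exp (-(Complex.I * (θ t : ℂ))) * (-(Complex.I * (m t : ℂ)))) (Ici 0) t :=
      hE t ht
    exact (hA t ht).mul hEt'
  have hqne : ∀ t ∈ Ici (0:ℝ), q t ≠ 0 := by
    intro t ht
    rw [hqdef]
    exact mul_ne_zero (hαne t ht) (hEne t)
  have hαα : ∀ t ∈ Ici (0:ℝ), α t * conj' (α t) = ((‖α t‖ ^ 2 : ℝ) : ℂ) := by
    intro t ht
    rw [Complex.mul_conj]
    norm_cast
    rw [Complex.normSq_eq_norm_sq]
  -- the quotient q / conj q is constant
  have hnum : ∀ t ∈ Ici (0:ℝ),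
      (A t * E t + α t * (Complex.exp (-(Complex.I * (θ t : ℂ))) * (-(Complex.I * (m t : ℂ)))))
        * conj' (q t)
      - q t * conj' (A t * E t + α t * (Complex.exp (-(Complex.I * (θ t : ℂ)))
          * (-(Complex.I * (m t : ℂ))))) = 0 := by
    intro t ht
    have hEt : Complex.exp (-(Complex.I * (θ t : ℂ))) = E t := by rw [hEdef]
    rw [hEt]
    have hX : A t * conj' (α t) - conj' (A t * conj' (α t))
        = 2 * ((A t * conj' (α t)).im : ℂ) * Complex.I := by
      rw [Complex.sub_conj]
      push_cast
      ring
    have him : ((A t * conj' (α t)).im : ℂ) = (m t : ℂ) * ((‖α t‖ ^ 2 : ℝ) : ℂ) := by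
      have : (A t * conj' (α t)).im = m t * ‖α t‖ ^ 2 := by
        rw [hmdef]
        exact (div_mul_cancel₀ _ (hden t ht)).symm
      exact_mod_cast congrArg (fun x : ℝ => (x : ℂ)) this
    have hqc : q t = α t * E t := by rw [hqdef]
    rw [hqc]
    simp only [map_add, map_mul, map_neg, Complex.conj_I, Complex.conj_ofReal, Complex.conj_conj]
    have hEE' := hEE t
    have hαα' := hαα t ht
    simp only [map_mul, Complex.conj_conj] at hX
    linear_combination (A t * conj' (α t) - conj' (A t) * α t
          - 2 * Complex.I * ((m t : ℂ)) * (α t * conj' (α t))) * hEE'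
      + hX + (-2 * Complex.I * (m t : ℂ)) * hαα' + 2 * Complex.I * him
  -- q / conj q is constant, hence q is real
  have hqconj : ∀ t ∈ Ici (0:ℝ), q t = conj' (q t) := by
    intro t ht
    have hp : ∀ s ∈ Ici (0:ℝ), HasDerivWithinAt (fun u => q u / conj' (q u)) 0 (Ici 0) s := by
      intro s hs
      have hqs := hq s hs
      have hqcs : HasDerivWithinAt (fun u => conj' (q u))
          (conj' (A s * E s + α s * (Complex.exp (-(Complex.I * (θ s : ℂ)))
            * (-(Complex.I * (m s : ℂ)))))) (Ici 0) s := by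
        simpa only [starRingEnd_apply] using hqs.star
      have hd := hqs.div hqcs (by simpa using hqne s hs)
      have hzero : (A s * E s + α s * (Complex.exp (-(Complex.I * (θ s : ℂ)))
            * (-(Complex.I * (m s : ℂ))))) * conj' (q s)
          - q s * conj' (A s * E s + α s * (Complex.exp (-(Complex.I * (θ s : ℂ)))
            * (-(Complex.I * (m s : ℂ))))) = 0 := hnum s hs
      rw [hzero, zero_div] at hd
      exact hd
    have hcst := const_of_derivWithin_zero' hp ht
    have hq0 : q 0 = 1 := by
      rw [hqdef]
      simp only []
      rw [hα0, hEdef]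
      simp [hθ0]
    rw [hq0] at hcst
    simp only [map_one, div_one] at hcst
    rw [div_eq_one_iff_eq (by simpa using hqne t ht)] at hcst
    exact hcst
  -- q is positive real, with value ‖α t‖
  have hqval : ∀ t ∈ Ici (0:ℝ), q t = ((‖α t‖ : ℝ) : ℂ) := by
    have hqre : ∀ t ∈ Ici (0:ℝ), q t = (((q t).re : ℝ) : ℂ) := by
      intro t ht
      have := hqconj t ht
      have him0 : (q t).im = 0 := by
        have h2 := congrArg Complex.im this
        simp only [Complex.conj_im] at h2
        linarith
      have h3 := Complex.re_add_im (q t)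
      rw [him0] at h3
      simp only [Complex.ofReal_zero, zero_mul, add_zero] at h3
      exact h3.symm
    have hEnorm : ∀ t : ℝ, ‖E t‖ = 1 := by
      intro t
      rw [hEdef]
      simp only []
      rw [Complex.norm_exp]
      simp
    have hqnorm : ∀ t ∈ Ici (0:ℝ), ‖q t‖ = ‖α t‖ := by
      intro t ht
      rw [hqdef]
      simp only []
      rw [norm_mul, hEnorm, mul_one]
    have hρcont : ContinuousOn (fun t => (q t).re) (Ici 0) :=
      Complex.continuous_re.comp_continuousOn
        (fun t ht => (hq t ht).continuousWithinAt)
    have hρne : ∀ t ∈ Ici (0:ℝ), (q t).re ≠ 0 := by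
      intro t ht h0
      have h1 := hqre t ht
      rw [h0] at h1
      simp only [Complex.ofReal_zero] at h1
      exact hqne t ht h1
    have hρ0 : (q 0).re = 1 := by
      have hq0 : q 0 = 1 := by
        rw [hqdef]
        simp only []
        rw [hα0, hEdef]
        simp [hθ0]
      rw [hq0]
      simp
    have hρpos : ∀ t ∈ Ici (0:ℝ), 0 < (q t).re := by
      intro t ht
      by_contra hneg
      push_neg at hneg
      have hlt : (q t).re < 0 := lt_of_le_of_ne hneg (hρne t ht)
      have hsub : Icc (0:ℝ) t ⊆ Ici 0 := Icc_subset_Ici_self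
      have hIVT := intermediate_value_Icc' (ht : (0:ℝ) ≤ t) (hρcont.mono hsub)
      have h0mem : (0:ℝ) ∈ Icc ((q t).re) ((q 0).re) := by
        constructor
        · linarith
        · rw [hρ0]; linarith
      obtain ⟨s, hs, hρs⟩ := hIVT h0mem
      exact hρne s (hsub hs) hρs
    intro t ht
    have h1 := hqre t ht
    have h2 : (q t).re = ‖α t‖ := by
      have h3 := hqnorm t ht
      rw [h1] at h3
      rw [Complex.norm_real, Real.norm_eq_abs, abs_of_pos (hρpos t ht)] at h3
      exact h3
    rw [h1, h2]
  -- final assembly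
  refine ⟨β, ν₀, ?_, hβ0, ?_⟩
  · -- C¹ regularity of β
    rw [show (1 : WithTop ℕ∞) = 0 + 1 from (zero_add 1).symm,
      contDiffOn_succ_iff_derivWithin (uniqueDiffOn_Ici 0)]
    refine ⟨fun s hs => (hB s hs).differentiableWithinAt, ?_, ?_⟩
    · intro h
      simp at h
    · rw [contDiffOn_zero]
      exact hBc.congr (fun s hs => (hB s hs).derivWithin (uniqueDiffOn_Ici 0 s hs))
  · intro t ht z hz
    have hint : (∫ s in (0:ℝ)..t,
        (ν₀ + (β s * conj' (derivWithin β (Ici 0) s)).im) / (1 - ‖lam‖ ^ 2 + ‖β s‖ ^ 2))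
        = θ t := by
      rw [hθdef]
      apply intervalIntegral.integral_congr
      intro s hs
      rw [uIcc_of_le (ht : (0:ℝ) ≤ t)] at hs
      have hs' : s ∈ Ici (0:ℝ) := Icc_subset_Ici_self hs
      have hder : derivWithin β (Ici 0) s = B s :=
        (hB s hs').derivWithin (uniqueDiffOn_Ici 0 s hs')
      have hkim : (A s * conj' (α s)).im - (β s * conj' (B s)).im = ν₀ := by
        have := congrArg Complex.im (hkey s hs')
        simpa using this
      have hden2 : 1 - ‖lam‖ ^ 2 + ‖β s‖ ^ 2 = ‖α s‖ ^ 2 := by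
        have := hαnormsq s hs'
        rw [hcdef] at this
        linarith
      simp only []
      rw [hder, hmdef]
      simp only []
      rw [hden2]
      congr 1
      linarith [hkim]
    have hsq : Real.sqrt (1 - ‖lam‖ ^ 2 + ‖β t‖ ^ 2) = ‖α t‖ := by
      rw [show 1 - ‖lam‖ ^ 2 + ‖β t‖ ^ 2 = ‖α t‖ ^ 2 by
        have := hαnormsq t ht
        rw [hcdef] at this
        linarith]
      exact Real.sqrt_sq (norm_nonneg _)
    have hEinv : E t * Complex.exp (Complex.I * (θ t : ℂ)) = 1 := by
      rw [hEdef]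
      simp only []
      rw [← Complex.exp_add]
      simp
    have hqv := hqval t ht
    rw [hqdef] at hqv
    simp only [] at hqv
    have hαval : α t = ((‖α t‖ : ℝ) : ℂ) * Complex.exp (Complex.I * (θ t : ℂ)) := by
      calc α t = α t * (E t * Complex.exp (Complex.I * (θ t : ℂ))) := by rw [hEinv, mul_one]
      _ = (α t * E t) * Complex.exp (Complex.I * (θ t : ℂ)) := by ring
      _ = _ := by rw [hqv]
    refine ⟨?_, hgβ t ht z hz⟩
    rw [hint, hsq, hfα t ht z hz]
    conv_lhs => rw [hαval]
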